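/- The higher topology makes K{{t}} into a locally convex topological K-vector space: for every sequence (n_i)_{i∈ℤ} ⊂ ℤ ∪ {-∞} such that (i) there is c ∈ ℤ with n_i ≤ c for all i, and (ii) n_i → -∞ as i → ∞, the set Λ = Σ_{i∈ℤ} 𝔭^{n_i} t^i is an 𝒪-lattice in K{{t}}, and these sets form a basis of neighbourhoods of zero for the higher topology. -/

import Mathlib

/-!
Common setting: `K` is a characteristic-zero local field (a finite extension of `ℚ_p`)
with ring of integers `𝒪 = {c : K | ‖c‖ ≤ 1}`, maximal ideal `𝔭 = {c : K | ‖c‖ < 1}`,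
residue field of cardinality `q` and the absolute value normalised by `‖π‖ = q⁻¹`.
We formalise the two-dimensional local fields `K((t))` (as `LaurentSeries K`) and
`K{{t}}` (as the submodule `mixedCarrier K` of `ℤ → K`), their higher topologies, and
the relevant functional-analytic notions (lattices, seminorms, boundedness,
c-compactness, compactoidness, completeness for nets, duality).
-/

open Filter Topology Set Pointwise
open scoped Classical

noncomputable section

namespace TwoDimLF

variable (K : Type) [NontriviallyNormedField K]

/-- `K` is a characteristic-zero nonarchimedean local field: the norm is nonarchimedean,
takes the values `q^ℤ` on `K˟` (with a uniformizer of norm `q⁻¹`), `K` is complete, locally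
compact, of characteristic zero, and the residue field has exactly `q` elements. -/
structure IsCharZeroLocalField (q : ℕ) : Prop where
  nonarch : ∀ x y : K, ‖x + y‖ ≤ max ‖x‖ ‖y‖
  one_lt_q : 1 < q
  norm_values : ∀ x : K, x ≠ 0 → ∃ n : ℤ, ‖x‖ = (q : ℝ) ^ (-n)
  exists_uniformizer : ∃ π : K, ‖π‖ = ((q : ℝ))⁻¹
  charZero : CharZero K
  locallyCompact : LocallyCompactSpace K
  complete : CompleteSpace K
  residue_card : ∃ s : Finset K, s.card = q ∧
    ∀ x : K, ‖x‖ ≤ 1 → ∃! y, y ∈ s ∧ ‖x - y‖ < 1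

/-- The fractional ideal `𝔭^n ⊆ K` for `n ∈ ℤ ∪ {-∞}`, with the convention `𝔭^(-∞) = K`. -/
def pB (q : ℕ) (n : WithBot ℤ) : Set K :=
  WithBot.recBotCoe Set.univ (fun m : ℤ => {x : K | ‖x‖ ≤ (q : ℝ) ^ (-m)}) n

/-- The fractional ideal `𝔭^n ⊆ K` for `n ∈ ℤ ∪ {∞}`, with the convention `𝔭^∞ = {0}`. -/
def pT (q : ℕ) (n : WithTop ℤ) : Set K :=
  WithTop.recTopCoe {0} (fun m : ℤ => {x : K | ‖x‖ ≤ (q : ℝ) ^ (-m)}) n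

/-- The fractional ideal `𝔭^n ⊆ K` for `n ∈ ℤ ∪ {±∞}`. -/
def pE (q : ℕ) (n : WithBot (WithTop ℤ)) : Set K :=
  WithBot.recBotCoe Set.univ (fun m : WithTop ℤ => pT K q m) n

/-- `q ^ n ∈ ℝ` for `n ∈ ℤ ∪ {-∞}`, with the convention `q^(-∞) = 0`. -/
def qpow (q : ℕ) (n : WithBot ℤ) : ℝ :=
  WithBot.recBotCoe 0 (fun m : ℤ => (q : ℝ) ^ m) n

/-- `1 - k` for `k ∈ ℤ ∪ {±∞}` (so `1 - (±∞) = ∓∞`). -/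
def oneSubE : WithBot (WithTop ℤ) → WithBot (WithTop ℤ) :=
  WithBot.recBotCoe ((⊤ : WithTop ℤ) : WithBot (WithTop ℤ))
    (WithTop.recTopCoe (⊥ : WithBot (WithTop ℤ))
      (fun z : ℤ => (((1 - z : ℤ) : WithTop ℤ) : WithBot (WithTop ℤ))))

section LCS

variable {V : Type} [AddCommGroup V] [Module K V]

/-- `S` is an `𝒪`-submodule of the `K`-vector space `V`, where `𝒪 = {c : K | ‖c‖ ≤ 1}`
is the ring of integers of `K`. -/
def IsOSubmodule (S : Set V) : Prop :=
  (0 : V) ∈ S ∧ (∀ x ∈ S, ∀ y ∈ S, x + y ∈ S) ∧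
    ∀ c : K, ‖c‖ ≤ 1 → ∀ x ∈ S, c • x ∈ S

/-- `S` is an `𝒪`-lattice in `V`: an `𝒪`-submodule such that every vector is carried
into `S` by some nonzero scalar. -/
def IsLatticeSet (S : Set V) : Prop :=
  IsOSubmodule K S ∧ ∀ v : V, ∃ a : K, a ≠ 0 ∧ a • v ∈ S

/-- A (nonarchimedean) seminorm on the `K`-vector space `V`. -/
def IsSeminorm (N : V → ℝ) : Prop :=
  (∀ (c : K) (v : V), N (c • v) = ‖c‖ * N v) ∧ ∀ v w : V, N (v + w) ≤ max (N v) (N w)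

/-- The gauge seminorm of a lattice `Λ ⊆ V`: `‖v‖_Λ = inf {‖a‖ : v ∈ aΛ}`. -/
def gaugeSeminorm (Λ : Set V) (v : V) : ℝ :=
  sInf {r : ℝ | ∃ a : K, v ∈ a • Λ ∧ r = ‖a‖}

/-- The group topology on `W` determined by a family `B` of neighbourhoods of zero:
neighbourhoods of `x` are generated by the translates `x + U`, `U ∈ B`. -/
def addTopologyOf {W : Type} [AddCommGroup W] (B : Set (Set W)) : TopologicalSpace W :=
  TopologicalSpace.mkOfNhds fun x => Filter.map (fun v => x + v) (⨅ U ∈ B, Filter.principal U)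

/-- `B` is (Von-Neumann) bounded for the locally convex topology `τ`: every open lattice
absorbs it. -/
def IsVNBounded (τ : TopologicalSpace V) (B : Set V) : Prop :=
  ∀ Λ : Set V, IsLatticeSet K Λ → IsOpen[τ] Λ → ∃ a : K, B ⊆ a • Λ

/-- The `𝒪`-submodule `A ⊆ V` is c-compact: for every decreasing filtered family of open
lattices `L i`, the canonical map `A → lim A/(L i ∩ A)` is surjective (phrased via
compatible families of representatives). -/
def IsCCompact (τ : TopologicalSpace V) (A : Set V) : Prop :=
  ∀ (ι : Type) (L : ι → Set V),
    (∀ i, IsLatticeSet K (L i) ∧ IsOpen[τ] (L i)) →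
    (∀ i j, ∃ k, L k ⊆ L i ∧ L k ⊆ L j) →
    ∀ x : ι → V, (∀ i, x i ∈ A) →
      (∀ i j, L j ⊆ L i → x j - x i ∈ L i) →
      ∃ a ∈ A, ∀ i, a - x i ∈ L i

/-- The `𝒪`-submodule `A ⊆ V` is compactoid: for every open lattice `Λ` there are finitely
many vectors `v₁, …, v_m ∈ V` with `A ⊆ Λ + 𝒪v₁ + ⋯ + 𝒪v_m`. -/
def IsCompactoid (τ : TopologicalSpace V) (A : Set V) : Prop :=
  ∀ Λ : Set V, IsLatticeSet K Λ → IsOpen[τ] Λ →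
    ∃ (m : ℕ) (v : Fin m → V),
      A ⊆ {u : V | ∃ l ∈ Λ, ∃ c : Fin m → K, (∀ j, ‖c j‖ ≤ 1) ∧ u = l + ∑ j, c j • v j}

/-- `A ⊆ V` is complete: every Cauchy net with values in `A` converges to a point of `A`
(for the topology `τ`). -/
def IsNetComplete (τ : TopologicalSpace V) (A : Set V) : Prop :=
  ∀ (ι : Type) [Preorder ι] [Nonempty ι],
    (∀ i j : ι, ∃ k, i ≤ k ∧ j ≤ k) →
    ∀ x : ι → V, (∀ i, x i ∈ A) →
      (∀ U ∈ @nhds V τ 0, ∃ i0, ∀ j ≥ i0, ∀ k ≥ i0, x j - x k ∈ U) →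
      ∃ a ∈ A, Filter.Tendsto x Filter.atTop (@nhds V τ a)

/-- `τ` makes `V` a locally convex topological `K`-vector space: it is a vector-space
topology whose filter of neighbourhoods of zero admits a basis of lattices. -/
def IsLCTVS (τ : TopologicalSpace V) : Prop :=
  @IsTopologicalAddGroup V τ _ ∧ @ContinuousSMul K V _ _ τ ∧
    ∀ S ∈ @nhds V τ 0, ∃ Λ : Set V, IsLatticeSet K Λ ∧ Λ ∈ @nhds V τ 0 ∧ Λ ⊆ S

/-- The topological dual of `(V, τ)`: continuous `K`-linear forms, as a set of functions. -/
def dualSet (τ : TopologicalSpace V) : Set (V → K) :=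
  {l | IsLinearMap K l ∧ @Continuous V K τ _ l}

/-- Basic neighbourhoods of zero for the `c`-topology on `V → K`: uniform convergence on
compactoid `𝒪`-submodules. -/
def cTopBasic (τ : TopologicalSpace V) : Set (Set (V → K)) :=
  {S | ∃ (B : Set V) (ε : ℝ), IsOSubmodule K B ∧ IsCompactoid K τ B ∧ 0 < ε ∧
    S = {l : V → K | ∀ x ∈ B, ‖l x‖ ≤ ε}}

/-- The `c`-topology (uniform convergence on compactoid `𝒪`-submodules) on `V → K`. -/
def cTop (τ : TopologicalSpace V) : TopologicalSpace (V → K) :=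
  addTopologyOf (cTopBasic K τ)

/-- The pseudo-polar `A^p = {l ∈ V' : |l(v)| < 1 for all v ∈ A}`. -/
def pseudoPolar (τ : TopologicalSpace V) (A : Set V) : Set (V → K) :=
  {l | l ∈ dualSet K τ ∧ ∀ v ∈ A, ‖l v‖ < 1}

/-- The pseudo-bipolar `A^{pp} = {v ∈ V : |l(v)| < 1 for all l ∈ A^p}`. -/
def pseudoBipolar (τ : TopologicalSpace V) (A : Set V) : Set V :=
  {v | ∀ l ∈ pseudoPolar K τ A, ‖l v‖ < 1}

end LCS

/-! ### The equal characteristic field `K((t))` -/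

/-- Basic neighbourhoods of zero for the higher topology on `K((t))`:
`Σ U_i t^i` where each `U_i` is an open neighbourhood of `0` in `K` and `U_i = K` for all
sufficiently large `i`. -/
def laurentBasic : Set (Set (LaurentSeries K)) :=
  {S | ∃ U : ℤ → Set K, (∀ i, IsOpen (U i) ∧ (0 : K) ∈ U i) ∧
    (∃ N : ℤ, ∀ i, N ≤ i → U i = Set.univ) ∧
    S = {f : LaurentSeries K | ∀ i, f.coeff i ∈ U i}}

/-- The higher topology on `K((t))`. -/
def laurentTop : TopologicalSpace (LaurentSeries K) := addTopologyOf (laurentBasic K)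

/-- `Λ = Σ_{i∈ℤ} 𝔭^{n_i} t^i ⊆ K((t))` for a sequence `(n_i) ⊆ ℤ ∪ {-∞}`. -/
def laurentLambda (q : ℕ) (n : ℤ → WithBot ℤ) : Set (LaurentSeries K) :=
  {f | ∀ i, f.coeff i ∈ pB K q (n i)}

/-- `B = Σ_{i∈ℤ} 𝔭^{k_i} t^i ⊆ K((t))` for a sequence `(k_i) ⊆ ℤ ∪ {∞}`. -/
def laurentPT (q : ℕ) (k : ℤ → WithTop ℤ) : Set (LaurentSeries K) :=
  {f | ∀ i, f.coeff i ∈ pT K q (k i)}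

/-- `A = Σ_{i∈ℤ} 𝔭^{k_i} t^i ⊆ K((t))` for a sequence `(k_i) ⊆ ℤ ∪ {±∞}`. -/
def laurentPE (q : ℕ) (k : ℤ → WithBot (WithTop ℤ)) : Set (LaurentSeries K) :=
  {f | ∀ i, f.coeff i ∈ pE K q (k i)}

/-- The admissible seminorm `‖Σ x_i t^i‖ = max_i ‖x_i‖ q^{n_i}` on `K((t))`. -/
def laurentSeminorm (q : ℕ) (n : ℤ → WithBot ℤ) (f : LaurentSeries K) : ℝ :=
  sSup {r : ℝ | ∃ i : ℤ, r = ‖f.coeff i‖ * qpow q (n i)}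

/-- The ring of integers `K[[t]] ⊆ K((t))`. -/
def laurentIntegers : Set (LaurentSeries K) := {f | ∀ i, i < 0 → f.coeff i = 0}

/-- The rank-two ring of integers `𝒪 + tK[[t]] ⊆ K((t))`. -/
def laurentRankTwo : Set (LaurentSeries K) :=
  {f | (∀ i, i < 0 → f.coeff i = 0) ∧ ‖f.coeff 0‖ ≤ 1}

/-- The pairing `γ(x)(y) = π₀(xy) = Σ_i x_i y_{-i}` on `K((t))`. -/
def laurentPairing (x y : LaurentSeries K) : K := ∑' i : ℤ, x.coeff i * y.coeff (-i)

/-! ### The mixed characteristic field `K{{t}}` -/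

/-- The underlying `K`-vector space of `K{{t}}`: functions `x : ℤ → K` (coefficients of
`Σ x_i t^i`) with `inf_i v_K(x_i) > -∞` (i.e. bounded norms) and `x_i → 0` as `i → -∞`. -/
def mixedCarrier : Submodule K (ℤ → K) where
  carrier := {x | (∃ C : ℝ, ∀ i, ‖x i‖ ≤ C) ∧ Filter.Tendsto x Filter.atBot (nhds (0 : K))}
  zero_mem' := ⟨⟨0, fun i => by simp⟩, tendsto_const_nhds⟩
  add_mem' := by
    rintro x y ⟨⟨C, hC⟩, hx⟩ ⟨⟨D, hD⟩, hy⟩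
    refine ⟨⟨C + D, fun i => (norm_add_le _ _).trans (add_le_add (hC i) (hD i))⟩, ?_⟩
    convert hx.add hy using 1 <;> first | (funext i; rfl) | simp
  smul_mem' := by
    rintro c x ⟨⟨C, hC⟩, hx⟩
    refine ⟨⟨‖c‖ * C, fun i => ?_⟩, ?_⟩
    · have h : ‖(c • x) i‖ = ‖c‖ * ‖x i‖ := by simp [norm_smul]
      rw [h]
      exact mul_le_mul_of_nonneg_left (hC i) (norm_nonneg c)
    · convert hx.const_smul c using 1 <;> first | (funext i; rfl) | simp

/-- The field `K{{t}}`, as a `K`-vector space. -/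
abbrev Mt := ↥(mixedCarrier K)

/-- Basic neighbourhoods of zero for the higher topology on `K{{t}}`:
`Σ V_i t^i` where each `V_i` is an open neighbourhood of `0` in `K`, some `𝔭^c` is
contained in every `V_i`, and for every `l` eventually `𝔭^l ⊆ V_i`. -/
def mixedBasic (q : ℕ) : Set (Set (Mt K)) :=
  {S | ∃ Vs : ℤ → Set K, (∀ i, IsOpen (Vs i) ∧ (0 : K) ∈ Vs i) ∧
    (∃ c : ℤ, ∀ i, {x : K | ‖x‖ ≤ (q : ℝ) ^ (-c)} ⊆ Vs i) ∧
    (∀ l : ℤ, ∃ i0 : ℤ, ∀ i, i0 ≤ i → {x : K | ‖x‖ ≤ (q : ℝ) ^ (-l)} ⊆ Vs i) ∧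
    S = {f : Mt K | ∀ i, f.1 i ∈ Vs i}}

/-- The higher topology on `K{{t}}`. -/
def mixedTop (q : ℕ) : TopologicalSpace (Mt K) := addTopologyOf (mixedBasic K q)

/-- `Λ = Σ_{i∈ℤ} 𝔭^{n_i} t^i ⊆ K{{t}}` for a sequence `(n_i) ⊆ ℤ ∪ {-∞}`. -/
def mixedLambda (q : ℕ) (n : ℤ → WithBot ℤ) : Set (Mt K) :=
  {f | ∀ i, f.1 i ∈ pB K q (n i)}

/-- `B = Σ_{i∈ℤ} 𝔭^{k_i} t^i ⊆ K{{t}}` for a sequence `(k_i) ⊆ ℤ ∪ {∞}`. -/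
def mixedPT (q : ℕ) (k : ℤ → WithTop ℤ) : Set (Mt K) :=
  {f | ∀ i, f.1 i ∈ pT K q (k i)}

/-- `A = Σ_{i∈ℤ} 𝔭^{k_i} t^i ⊆ K{{t}}` for a sequence `(k_i) ⊆ ℤ ∪ {±∞}`. -/
def mixedPE (q : ℕ) (k : ℤ → WithBot (WithTop ℤ)) : Set (Mt K) :=
  {f | ∀ i, f.1 i ∈ pE K q (k i)}

/-- The admissible seminorm `‖Σ x_i t^i‖ = sup_i ‖x_i‖ q^{n_i}` on `K{{t}}`. -/
def mixedSeminorm (q : ℕ) (n : ℤ → WithBot ℤ) (f : Mt K) : ℝ :=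
  sSup {r : ℝ | ∃ i : ℤ, r = ‖f.1 i‖ * qpow q (n i)}

/-- The ring of integers `𝒪{{t}} ⊆ K{{t}}`. -/
def mixedIntegers : Set (Mt K) := {f | ∀ i, ‖f.1 i‖ ≤ 1}

/-- The rank-two ring of integers `Σ_{i<0} 𝔭 t^i + Σ_{i≥0} 𝒪 t^i ⊆ K{{t}}`. -/
def mixedRankTwo (q : ℕ) : Set (Mt K) :=
  {f | (∀ i : ℤ, i < 0 → ‖f.1 i‖ ≤ ((q : ℝ))⁻¹) ∧ ∀ i : ℤ, 0 ≤ i → ‖f.1 i‖ ≤ 1}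

/-- The monomial `t^i ∈ K{{t}}`. -/
def mixedT (i : ℤ) : Mt K :=
  ⟨fun j => if j = i then 1 else 0,
    ⟨⟨1, fun j => by by_cases h : j = i <;> simp [h]⟩, by
      refine (tendsto_const_nhds : Filter.Tendsto (fun _ : ℤ => (0 : K))
        Filter.atBot (nhds 0)).congr' ?_
      filter_upwards [Filter.eventually_le_atBot (i - 1)] with j hj
      have h : j ≠ i := by omega
      simp [h]⟩⟩

/-- Coefficients of the product of two elements of `K{{t}}` (Cauchy product). -/
def mixedMulCoeff (x y : Mt K) : ℤ → K := fun k => ∑' i : ℤ, x.1 i * y.1 (k - i)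

/-- Multiplication on `K{{t}}`. -/
def mixedMul (x y : Mt K) : Mt K :=
  if h : mixedMulCoeff K x y ∈ mixedCarrier K then ⟨_, h⟩ else 0

/-- The pairing `γ(x)(y) = π₀(xy) = Σ_i x_i y_{-i}` on `K{{t}}`. -/
def mixedPairing (x y : Mt K) : K := ∑' i : ℤ, x.1 i * y.1 (-i)


section Statement4Proof

variable {q : ℕ}

lemma one_lt_q' {K : Type} [NontriviallyNormedField K] (hK : IsCharZeroLocalField K q) :
    (1:ℝ) < (q:ℝ) := by exact_mod_cast hK.one_lt_q

lemma pB_coe (m : ℤ) : pB K q (m : WithBot ℤ) = {x : K | ‖x‖ ≤ (q:ℝ)^(-m)} := rfl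

lemma pB_bot : pB K q (⊥ : WithBot ℤ) = Set.univ := rfl

lemma zero_mem_pB (n : WithBot ℤ) : (0:K) ∈ pB K q n := by
  induction n using WithBot.recBotCoe with
  | bot => trivial
  | coe m =>
    rw [pB_coe]
    simp only [Set.mem_setOf_eq, norm_zero]
    positivity

lemma pB_mono (hq : 1 < (q:ℝ)) {n n' : WithBot ℤ} (h : n ≤ n') : pB K q n' ⊆ pB K q n := by
  induction n using WithBot.recBotCoe with
  | bot => exact fun x _ => trivial
  | coe m =>
    induction n' using WithBot.recBotCoe with
    | bot => exact absurd h (by simp)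
    | coe m' =>
      intro x hx
      rw [pB_coe] at hx ⊢
      have hmm : m ≤ m' := by exact_mod_cast h
      exact le_trans hx (zpow_le_zpow_right₀ hq.le (by omega))

lemma mem_pB_of_le (hq : 1 < (q:ℝ)) {m : ℤ} {n : WithBot ℤ} (hn : n ≤ (m : WithBot ℤ))
    {x : K} (hx : ‖x‖ ≤ (q:ℝ)^(-m)) : x ∈ pB K q n :=
  pB_mono K hq hn (by rwa [pB_coe])

lemma pB_add (hK : IsCharZeroLocalField K q) {n : WithBot ℤ} {x y : K}
    (hx : x ∈ pB K q n) (hy : y ∈ pB K q n) : x + y ∈ pB K q n := by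
  induction n using WithBot.recBotCoe with
  | bot => trivial
  | coe m =>
    rw [pB_coe] at hx hy ⊢
    exact le_trans (hK.nonarch x y) (max_le hx hy)

lemma pB_smul {n : WithBot ℤ} {c x : K} (hc : ‖c‖ ≤ 1) (hx : x ∈ pB K q n) :
    c * x ∈ pB K q n := by
  induction n using WithBot.recBotCoe with
  | bot => trivial
  | coe m =>
    rw [pB_coe] at hx ⊢
    calc ‖c * x‖ = ‖c‖ * ‖x‖ := norm_mul c x
    _ ≤ 1 * ‖x‖ := by gcongr
    _ ≤ (q:ℝ)^(-m) := by simpa using hx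

lemma pB_neg {n : WithBot ℤ} {x : K} (hx : x ∈ pB K q n) : -x ∈ pB K q n := by
  induction n using WithBot.recBotCoe with
  | bot => trivial
  | coe m => rw [pB_coe] at hx ⊢; simpa using hx

lemma pB_open (hK : IsCharZeroLocalField K q) (n : WithBot ℤ) : IsOpen (pB K q n) := by
  induction n using WithBot.recBotCoe with
  | bot => exact isOpen_univ
  | coe m =>
    have hq := one_lt_q' hK
    have heq : pB K q (m : WithBot ℤ) = Metric.ball (0:K) ((q:ℝ)^(-m+1)) := by
      ext x
      rw [pB_coe, Set.mem_setOf_eq, mem_ball_zero_iff]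
      constructor
      · intro h
        exact lt_of_le_of_lt h (by
          have : (q:ℝ)^(-m) < (q:ℝ)^(-m+1) := by
            apply zpow_lt_zpow_right₀ hq; omega
          exact this)
      · intro h
        rcases eq_or_ne x 0 with rfl | hx0
        · simp only [norm_zero]; positivity
        · obtain ⟨k, hk⟩ := hK.norm_values x hx0
          rw [hk] at h ⊢
          have : -k < -m + 1 := (zpow_lt_zpow_iff_right₀ hq).mp h
          exact zpow_le_zpow_right₀ hq.le (by omega)
    rw [heq]
    exact Metric.isOpen_ball

/-- The two conditions on the integer sequence. -/
def LamCond (n : ℤ → WithBot ℤ) : Prop :=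
  (∃ c : ℤ, ∀ i : ℤ, n i ≤ (c : WithBot ℤ)) ∧
  (∀ l : ℤ, ∃ i0 : ℤ, ∀ i : ℤ, i0 ≤ i → n i ≤ (l : WithBot ℤ))

lemma lambda_zero (n : ℤ → WithBot ℤ) : (0 : Mt K) ∈ mixedLambda K q n := by
  intro i
  show ((0 : Mt K) : ℤ → K) i ∈ _
  simp only [ZeroMemClass.coe_zero, Pi.zero_apply]
  exact zero_mem_pB K _

lemma lambda_add (hK : IsCharZeroLocalField K q) {n : ℤ → WithBot ℤ} {f g : Mt K}
    (hf : f ∈ mixedLambda K q n) (hg : g ∈ mixedLambda K q n) :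
    f + g ∈ mixedLambda K q n := by
  intro i
  show ((f + g : Mt K) : ℤ → K) i ∈ _
  rw [show ((f + g : Mt K) : ℤ → K) i = (f : ℤ → K) i + (g : ℤ → K) i from rfl]
  exact pB_add K hK (hf i) (hg i)

lemma lambda_smul {n : ℤ → WithBot ℤ} {c : K} (hc : ‖c‖ ≤ 1) {f : Mt K}
    (hf : f ∈ mixedLambda K q n) : c • f ∈ mixedLambda K q n := by
  intro i
  show ((c • f : Mt K) : ℤ → K) i ∈ _
  simp only [SetLike.val_smul, Pi.smul_apply, smul_eq_mul]
  exact pB_smul K hc (hf i)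

lemma lambda_neg {n : ℤ → WithBot ℤ} {f : Mt K}
    (hf : f ∈ mixedLambda K q n) : -f ∈ mixedLambda K q n := by
  intro i
  show ((-f : Mt K) : ℤ → K) i ∈ _
  simp only [NegMemClass.coe_neg, Pi.neg_apply]
  exact pB_neg K (hf i)

lemma univ_mem_basic : Set.univ ∈ mixedBasic K q := by
  refine ⟨fun _ => Set.univ, fun i => ⟨isOpen_univ, trivial⟩, ⟨0, fun i => Set.subset_univ _⟩,
    fun l => ⟨0, fun i _ => Set.subset_univ _⟩, ?_⟩
  ext f; simp

lemma zero_mem_of_basic {U : Set (Mt K)} (hU : U ∈ mixedBasic K q) : (0 : Mt K) ∈ U := by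
  obtain ⟨Vs, hVs, _, _, rfl⟩ := hU
  intro i
  show ((0 : Mt K) : ℤ → K) i ∈ _
  simp only [ZeroMemClass.coe_zero, Pi.zero_apply]
  exact (hVs i).2

lemma inter_mem_basic (hq : 1 < (q:ℝ)) {U V : Set (Mt K)} (hU : U ∈ mixedBasic K q)
    (hV : V ∈ mixedBasic K q) : U ∩ V ∈ mixedBasic K q := by
  obtain ⟨Vs, hVs, ⟨c1, hc1⟩, hev1, rfl⟩ := hU
  obtain ⟨Ws, hWs, ⟨c2, hc2⟩, hev2, rfl⟩ := hV
  refine ⟨fun i => Vs i ∩ Ws i, fun i => ⟨(hVs i).1.inter (hWs i).1, (hVs i).2, (hWs i).2⟩,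
    ⟨max c1 c2, fun i => ?_⟩, fun l => ?_, ?_⟩
  · intro x hx
    simp only [Set.mem_setOf_eq] at hx
    constructor
    · exact hc1 i (le_trans hx (zpow_le_zpow_right₀ hq.le (by simp)))
    · exact hc2 i (le_trans hx (zpow_le_zpow_right₀ hq.le (by simp)))
  · obtain ⟨a1, h1⟩ := hev1 l
    obtain ⟨a2, h2⟩ := hev2 l
    exact ⟨max a1 a2, fun i hi x hx =>
      ⟨h1 i (le_trans (le_max_left _ _) hi) hx, h2 i (le_trans (le_max_right _ _) hi) hx⟩⟩
  · ext f
    simp only [Set.mem_inter_iff, Set.mem_setOf_eq, forall_and]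

/-- The filter of basic neighbourhoods of zero. -/
def Flt (q : ℕ) : Filter (Mt K) := ⨅ U ∈ mixedBasic K q, Filter.principal U

lemma mem_Flt (hq : 1 < (q:ℝ)) {S : Set (Mt K)} :
    S ∈ Flt K q ↔ ∃ U ∈ mixedBasic K q, U ⊆ S := by
  rw [Flt, Filter.mem_biInf_of_directed]
  · simp only [Filter.mem_principal]
  · rintro U hU V hV
    refine ⟨U ∩ V, inter_mem_basic K hq hU hV, ?_, ?_⟩
    · exact Filter.principal_mono.mpr Set.inter_subset_left
    · exact Filter.principal_mono.mpr Set.inter_subset_right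
  · exact ⟨_, univ_mem_basic K⟩

lemma basic_mem_Flt (hq : 1 < (q:ℝ)) {U : Set (Mt K)} (hU : U ∈ mixedBasic K q) :
    U ∈ Flt K q := (mem_Flt K hq).mpr ⟨U, hU, subset_rfl⟩

lemma lambda_mem_basic (hK : IsCharZeroLocalField K q) {n : ℤ → WithBot ℤ} (hn : LamCond n) :
    mixedLambda K q n ∈ mixedBasic K q := by
  obtain ⟨⟨c, hc⟩, htend⟩ := hn
  refine ⟨fun i => pB K q (n i), fun i => ⟨pB_open K hK _, zero_mem_pB K _⟩,
    ⟨c, fun i => ?_⟩, fun l => ?_, rfl⟩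
  · intro x hx
    exact pB_mono K (one_lt_q' hK) (hc i) (by rwa [pB_coe])
  · obtain ⟨i0, hi0⟩ := htend l
    exact ⟨i0, fun i hi x hx => pB_mono K (one_lt_q' hK) (hi0 i hi) (by rwa [pB_coe])⟩

/-- Iterated maximum `G m = max_{k ≤ m} g (c - k)`. -/
def Gaux (g : ℤ → ℤ) (c : ℤ) : ℕ → ℤ
  | 0 => g c
  | (m+1) => max (Gaux g c m) (g (c - ((m:ℤ)+1)))

lemma exists_lambda_subset (hK : IsCharZeroLocalField K q) {U : Set (Mt K)}
    (hU : U ∈ mixedBasic K q) :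
    ∃ n : ℤ → WithBot ℤ, LamCond n ∧ mixedLambda K q n ⊆ U := by
  classical
  have hq := one_lt_q' hK
  obtain ⟨Vs, hVs, ⟨c, hc⟩, hev, rfl⟩ := hU
  choose g hg using hev
  set G : ℕ → ℤ := Gaux g c with hGdef
  have hGmono : Monotone G := monotone_nat_of_le_succ (fun m => le_max_left _ _)
  have hGge : ∀ m k : ℕ, k ≤ m → g (c - (k:ℤ)) ≤ G m := by
    intro m
    induction m with
    | zero =>
      intro k hk
      interval_cases k
      simp [hGdef, Gaux]
    | succ m ih =>
      intro k hk
      rcases Nat.lt_succ_iff_lt_or_eq.mp (Nat.lt_succ_of_le hk) with h | rfl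
      · exact le_trans (ih k (Nat.lt_succ_iff.mp h)) (le_max_left _ _)
      · refine le_trans (le_of_eq ?_) (le_max_right _ _ :
          g (c - ((m:ℤ)+1)) ≤ G (m+1))
        push_cast; ring_nf
  let cnt : ℤ → ℕ := fun i => ((Finset.range (i.toNat + 1)).filter (fun m => G m ≤ i)).card
  let n : ℤ → WithBot ℤ := fun i => ((c + 1 - (cnt i : ℤ) : ℤ) : WithBot ℤ)
  have hball : ∀ i : ℤ, pB K q (n i) ⊆ Vs i := by
    intro i
    rcases Nat.eq_zero_or_pos (cnt i) with h0 | hpos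
    · have : n i = ((c + 1 : ℤ) : WithBot ℤ) := by simp [n, h0]
      rw [this, pB_coe]
      intro x hx
      exact hc i (le_trans hx (zpow_le_zpow_right₀ hq.le (by omega)))
    · set F := (Finset.range (i.toNat + 1)).filter (fun m => G m ≤ i) with hF
      have hFne : F.Nonempty := Finset.card_pos.mp hpos
      set M := F.max' hFne with hM
      have hMmem : M ∈ F := F.max'_mem hFne
      have hGMi : G M ≤ i := (Finset.mem_filter.mp hMmem).2
      have hcard : cnt i ≤ M + 1 := by
        have hsub : F ⊆ Finset.range (M + 1) := by
          intro x hx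
          exact Finset.mem_range.mpr (Nat.lt_succ_of_le (F.le_max' x hx))
        simpa using Finset.card_le_card hsub
      have hgM : g (c - (M:ℤ)) ≤ i := le_trans (hGge M M le_rfl) hGMi
      intro x hx
      apply hg (c - (M:ℤ)) i hgM
      rw [show n i = ((c + 1 - (cnt i : ℤ) : ℤ) : WithBot ℤ) from rfl, pB_coe] at hx
      refine le_trans hx (zpow_le_zpow_right₀ hq.le ?_)
      omega
  refine ⟨n, ⟨⟨c + 1, fun i => ?_⟩, fun l => ?_⟩, fun f hf i => hball i (hf i)⟩
  · exact WithBot.coe_le_coe.mpr (by omega)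
  · set m : ℕ := (c - l).toNat with hm
    refine ⟨max (G m) (m:ℤ), fun i hi => ?_⟩
    have him : (m:ℤ) ≤ i := le_trans (le_max_right _ _) hi
    have hiG : G m ≤ i := le_trans (le_max_left _ _) hi
    have hi0 : (0:ℤ) ≤ i := le_trans (by positivity) him
    have hsub : Finset.range (m + 1) ⊆ (Finset.range (i.toNat + 1)).filter (fun m' => G m' ≤ i) := by
      intro k hk
      rw [Finset.mem_range] at hk
      rw [Finset.mem_filter, Finset.mem_range]
      constructor
      · have : (k:ℤ) ≤ i := le_trans (by exact_mod_cast Nat.lt_succ_iff.mp hk) him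
        omega
      · exact le_trans (hGmono (Nat.lt_succ_iff.mp hk)) hiG
    have hcnt : m + 1 ≤ cnt i := by
      have := Finset.card_le_card hsub
      simpa using this
    have hml : c - l ≤ (m:ℤ) := Int.self_le_toNat _
    exact WithBot.coe_le_coe.mpr (by omega)

lemma nhds_mixedTop (hK : IsCharZeroLocalField K q) (x : Mt K) :
    @nhds _ (mixedTop K q) x = Filter.map (fun v => x + v) (Flt K q) := by
  have hq := one_lt_q' hK
  show @nhds _ (TopologicalSpace.mkOfNhds _) x = _
  rw [TopologicalSpace.nhds_mkOfNhds]
  · rfl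
  · intro a s hs
    rw [Filter.mem_map] at hs
    obtain ⟨U, hU, hUs⟩ := (mem_Flt K hq).mp hs
    simpa using hUs (zero_mem_of_basic K hU)
  · intro a s hs
    rw [Filter.mem_map] at hs
    obtain ⟨U, hU, hUs⟩ := (mem_Flt K hq).mp hs
    obtain ⟨n, hn, hsub⟩ := exists_lambda_subset K hK hU
    have hΛF : mixedLambda K q n ∈ Flt K q :=
      basic_mem_Flt K hq (lambda_mem_basic K hK hn)
    rw [Filter.eventually_iff]
    refine Filter.mem_of_superset (Filter.image_mem_map hΛF) ?_
    rintro y ⟨v, hv, rfl⟩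
    simp only [Set.mem_setOf_eq]
    rw [Filter.mem_map]
    refine (mem_Flt K hq).mpr ⟨mixedLambda K q n, lambda_mem_basic K hK hn, ?_⟩
    intro w hw
    show a + v + w ∈ s
    rw [add_assoc]
    exact hUs (hsub (lambda_add K hK hv hw))

lemma mem_nhds_iff' (hK : IsCharZeroLocalField K q) {x : Mt K} {s : Set (Mt K)} :
    s ∈ @nhds _ (mixedTop K q) x ↔
      ∃ n : ℤ → WithBot ℤ, LamCond n ∧ ∀ y ∈ mixedLambda K q n, x + y ∈ s := by
  rw [nhds_mixedTop K hK, Filter.mem_map, mem_Flt K (one_lt_q' hK)]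
  constructor
  · rintro ⟨U, hU, hUs⟩
    obtain ⟨n, hn, hsub⟩ := exists_lambda_subset K hK hU
    exact ⟨n, hn, fun y hy => hUs (hsub hy)⟩
  · rintro ⟨n, hn, h⟩
    exact ⟨mixedLambda K q n, lambda_mem_basic K hK hn, fun y hy => h y hy⟩

lemma smul_mem_lambda (hq : 1 < (q:ℝ)) {n : ℤ → WithBot ℤ} {c : ℤ}
    (hc : ∀ i, n i ≤ (c : WithBot ℤ)) {a : K} {f : Mt K} {C : ℝ}
    (hCf : ∀ i, ‖(f : ℤ → K) i‖ ≤ C) (ha : ‖a‖ * C ≤ (q:ℝ)^(-c)) :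
    a • f ∈ mixedLambda K q n := by
  intro i
  apply mem_pB_of_le K hq (hc i)
  rw [show ((a • f : Mt K) : ℤ → K) i = a * (f : ℤ → K) i from rfl, norm_mul]
  calc ‖a‖ * ‖(f : ℤ → K) i‖ ≤ ‖a‖ * C := by
        exact mul_le_mul_of_nonneg_left (hCf i) (norm_nonneg a)
  _ ≤ (q:ℝ)^(-c) := ha

lemma lambda_lattice (hK : IsCharZeroLocalField K q) {n : ℤ → WithBot ℤ} (hn : LamCond n) :
    IsLatticeSet K (mixedLambda K q n) := by
  have hq := one_lt_q' hK
  refine ⟨⟨lambda_zero K n, fun x hx y hy => lambda_add K hK hx hy,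
    fun c hc x hx => lambda_smul K hc hx⟩, ?_⟩
  intro v
  obtain ⟨C0, hC0⟩ := v.2.1
  obtain ⟨c, hc⟩ := hn.1
  obtain ⟨π, hπ⟩ := hK.exists_uniformizer
  have hq0 : (0:ℝ) < q := lt_trans one_pos hq
  have hπ0 : π ≠ 0 := by
    intro h
    rw [h, norm_zero] at hπ
    exact absurd hπ.symm (by positivity)
  obtain ⟨N, hN⟩ : ∃ N : ℕ, max C0 1 * (q:ℝ)^(c:ℤ) < (q:ℝ)^(N:ℤ) := by
    obtain ⟨N, hN⟩ := pow_unbounded_of_one_lt (max C0 1 * (q:ℝ)^(c:ℤ)) hq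
    exact ⟨N, by rw [zpow_natCast]; exact hN⟩
  refine ⟨π ^ N, pow_ne_zero N hπ0, smul_mem_lambda K hq hc (C := max C0 1)
    (fun i => le_trans (hC0 i) (le_max_left _ _)) ?_⟩
  have hπN : ‖π ^ N‖ = ((q:ℝ)^(N:ℤ))⁻¹ := by rw [norm_pow, hπ, inv_pow, zpow_natCast]
  have hA : (0:ℝ) < (q:ℝ)^(N:ℤ) := by positivity
  have hB : (0:ℝ) < (q:ℝ)^(c:ℤ) := by positivity
  rw [hπN, zpow_neg, inv_mul_le_iff₀ hA, ← div_eq_mul_inv, le_div_iff₀ hB]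
  exact hN.le

lemma mixed_contNeg (hK : IsCharZeroLocalField K q) :
    @ContinuousNeg (Mt K) (mixedTop K q) _ := by
  letI := mixedTop K q
  refine ⟨?_⟩
  · rw [continuous_iff_continuousAt]
    intro a
    rw [ContinuousAt, Filter.tendsto_def]
    intro s hs
    obtain ⟨n, hn, h⟩ := (mem_nhds_iff' K hK).mp hs
    refine (mem_nhds_iff' K hK).mpr ⟨n, hn, ?_⟩
    intro y hy
    simp only [Set.mem_preimage]
    have hne : -(a + y) = -a + (-y) := by abel
    rw [hne]
    exact h _ (lambda_neg K hy)

lemma mixed_contAdd (hK : IsCharZeroLocalField K q) :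
    @ContinuousAdd (Mt K) (mixedTop K q) _ := by
  letI := mixedTop K q
  refine ⟨?_⟩
  rw [continuous_iff_continuousAt]
  rintro ⟨a, b⟩
  rw [ContinuousAt, Filter.tendsto_def]
  intro s hs
  rw [nhds_prod_eq]
  obtain ⟨n, hn, h⟩ := (mem_nhds_iff' K hK).mp hs
  have hA : (fun y => a + y) '' mixedLambda K q n ∈ @nhds _ (mixedTop K q) a :=
    (mem_nhds_iff' K hK).mpr ⟨n, hn, fun y hy => ⟨y, hy, rfl⟩⟩
  have hB : (fun y => b + y) '' mixedLambda K q n ∈ @nhds _ (mixedTop K q) b :=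
    (mem_nhds_iff' K hK).mpr ⟨n, hn, fun y hy => ⟨y, hy, rfl⟩⟩
  refine Filter.mem_of_superset (Filter.prod_mem_prod hA hB) ?_
  rintro ⟨u, w⟩ ⟨⟨y, hy, rfl⟩, ⟨z, hz, rfl⟩⟩
  simp only [Set.mem_preimage]
  show (a + y) + (b + z) ∈ s
  rw [add_add_add_comm]
  exact h _ (lambda_add K hK hy hz)

lemma mixed_topAddGroup (hK : IsCharZeroLocalField K q) :
    @IsTopologicalAddGroup (Mt K) (mixedTop K q) _ := by
  letI := mixedTop K q
  haveI := mixed_contAdd K hK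
  haveI := mixed_contNeg K hK
  exact ⟨⟩

lemma mixed_contSMul (hK : IsCharZeroLocalField K q) :
    @ContinuousSMul K (Mt K) _ _ (mixedTop K q) := by
  letI := mixedTop K q
  have hq := one_lt_q' hK
  refine ⟨?_⟩
  rw [continuous_iff_continuousAt]
  rintro ⟨a, f⟩
  rw [ContinuousAt, Filter.tendsto_def]
  intro s hs
  obtain ⟨n, hn, h⟩ := (mem_nhds_iff' K hK).mp hs
  obtain ⟨C0, hC0⟩ := f.2.1
  set C : ℝ := max C0 1 with hC
  have hCpos : (0:ℝ) < C := lt_of_lt_of_le one_pos (le_max_right _ _)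
  have hCf : ∀ i, ‖(f : ℤ → K) i‖ ≤ C := fun i => le_trans (hC0 i) (le_max_left _ _)
  obtain ⟨cb, hcb⟩ := hn.1
  have hq0 : (0:ℝ) < q := lt_trans one_pos hq
  set δ : ℝ := (q:ℝ)^(-cb) / C with hδ
  have hδpos : 0 < δ := by positivity
  obtain ⟨k, hk⟩ : ∃ k : ℕ, ‖a‖ + δ ≤ (q:ℝ)^(k:ℤ) := by
    obtain ⟨k, hk⟩ := pow_unbounded_of_one_lt (‖a‖ + δ) hq
    exact ⟨k, by rw [zpow_natCast]; exact hk.le⟩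
  set n' : ℤ → WithBot ℤ := fun i => n i + (((k:ℤ)) : WithBot ℤ) with hn'def
  have hn' : LamCond n' := by
    constructor
    · refine ⟨cb + k, fun i => ?_⟩
      calc n i + (((k:ℤ)) : WithBot ℤ) ≤ ((cb:ℤ) : WithBot ℤ) + (((k:ℤ)) : WithBot ℤ) :=
            add_le_add (hcb i) le_rfl
      _ = (((cb + (k:ℤ) : ℤ)) : WithBot ℤ) := by rw [← WithBot.coe_add]
    · intro l
      obtain ⟨i0, hi0⟩ := hn.2 (l - k)
      refine ⟨i0, fun i hi => ?_⟩
      calc n i + (((k:ℤ)) : WithBot ℤ) ≤ ((l - (k:ℤ) : ℤ) : WithBot ℤ) + (((k:ℤ)) : WithBot ℤ) :=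
            add_le_add (hi0 i hi) le_rfl
      _ = ((l : ℤ) : WithBot ℤ) := by rw [← WithBot.coe_add]; congr 1; omega
  have hfn : (fun y => f + y) '' mixedLambda K q n' ∈ @nhds _ (mixedTop K q) f :=
    (mem_nhds_iff' K hK).mpr ⟨n', hn', fun y hy => ⟨y, hy, rfl⟩⟩
  have hball : Metric.closedBall a δ ∈ nhds a := Metric.closedBall_mem_nhds a hδpos
  rw [nhds_prod_eq]
  refine Filter.mem_of_superset (Filter.prod_mem_prod hball hfn) ?_
  rintro ⟨d, g⟩ ⟨hd, ⟨y, hy, rfl⟩⟩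
  simp only [Set.mem_preimage]
  show d • (f + y) ∈ s
  have hda : ‖d - a‖ ≤ δ := by rw [← dist_eq_norm]; exact Metric.mem_closedBall.mp hd
  have hdecomp : d • (f + y) = a • f + ((d - a) • f + d • y) := by
    module
  rw [hdecomp]
  apply h
  apply lambda_add K hK
  · apply smul_mem_lambda K hq hcb hCf
    calc ‖d - a‖ * C ≤ δ * C := mul_le_mul_of_nonneg_right hda hCpos.le
    _ = (q:ℝ)^(-cb) := by rw [hδ]; field_simp
  · intro i
    have hdn : ‖d‖ ≤ (q:ℝ)^(k:ℤ) := by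
      calc ‖d‖ = ‖a + (d - a)‖ := by ring_nf
      _ ≤ ‖a‖ + ‖d - a‖ := norm_add_le _ _
      _ ≤ ‖a‖ + δ := by linarith
      _ ≤ _ := hk
    rcases hni : n i with _ | m
    · exact Set.mem_univ _
    · have hmi : n' i = ((m + (k:ℤ) : ℤ) : WithBot ℤ) := by
        show n i + (((k:ℤ)) : WithBot ℤ) = ((m + (k:ℤ) : ℤ) : WithBot ℤ)
        rw [hni, WithBot.some_eq_coe, ← WithBot.coe_add]
      have hyi : ‖(y : ℤ → K) i‖ ≤ (q:ℝ)^(-(m + (k:ℤ))) := by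
        have := hy i
        rw [hmi] at this
        exact this
      show ‖((d • y : Mt K) : ℤ → K) i‖ ≤ (q:ℝ)^(-m)
      rw [show ((d • y : Mt K) : ℤ → K) i = d * (y : ℤ → K) i from rfl, norm_mul]
      calc ‖d‖ * ‖(y : ℤ → K) i‖ ≤ (q:ℝ)^(k:ℤ) * (q:ℝ)^(-(m + (k:ℤ))) :=
            mul_le_mul hdn hyi (norm_nonneg _) (by positivity)
      _ = (q:ℝ)^(-m) := by
            rw [← zpow_add₀ (ne_of_gt hq0)]
            congr 1
            omega

end Statement4Proof

/-- The higher topology makes `K{{t}}` into a locally convex topological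
`K`-vector space: for every sequence `(n_i) ⊆ ℤ ∪ {-∞}` which is bounded above and satisfies
`n_i → -∞` as `i → ∞`, the set `Λ = Σ_{i∈ℤ} 𝔭^{n_i} t^i` is an `𝒪`-lattice in `K{{t}}`, and
these sets form a basis of neighbourhoods of zero for the higher topology. -/
theorem statement4 (q : ℕ) (hK : IsCharZeroLocalField K q) :
    IsLCTVS K (mixedTop K q) ∧
    (∀ n : ℤ → WithBot ℤ,
      (∃ c : ℤ, ∀ i : ℤ, n i ≤ (c : WithBot ℤ)) →
      (∀ l : ℤ, ∃ i0 : ℤ, ∀ i : ℤ, i0 ≤ i → n i ≤ (l : WithBot ℤ)) →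
      IsLatticeSet K (mixedLambda K q n)) ∧
    (∀ S : Set (Mt K),
      S ∈ @nhds _ (mixedTop K q) 0 ↔
        ∃ n : ℤ → WithBot ℤ, (∃ c : ℤ, ∀ i : ℤ, n i ≤ (c : WithBot ℤ)) ∧
          (∀ l : ℤ, ∃ i0 : ℤ, ∀ i : ℤ, i0 ≤ i → n i ≤ (l : WithBot ℤ)) ∧
          mixedLambda K q n ⊆ S) := by
  refine ⟨⟨mixed_topAddGroup K hK, mixed_contSMul K hK, ?_⟩,
    fun n h1 h2 => lambda_lattice K hK ⟨h1, h2⟩, fun S => ?_⟩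
  · intro S hS
    obtain ⟨n, hn, h⟩ := (mem_nhds_iff' K hK).mp hS
    refine ⟨mixedLambda K q n, lambda_lattice K hK hn,
      (mem_nhds_iff' K hK).mpr ⟨n, hn, fun y hy => by rw [zero_add]; exact hy⟩,
      fun y hy => by have := h y hy; rwa [zero_add] at this⟩
  · rw [mem_nhds_iff' K hK]
    constructor
    · rintro ⟨n, hn, h⟩
      exact ⟨n, hn.1, hn.2, fun y hy => by have := h y hy; rwa [zero_add] at this⟩
    · rintro ⟨n, h1, h2, h⟩
      exact ⟨n, ⟨h1, h2⟩, fun y hy => by rw [zero_add]; exact h hy⟩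

end TwoDimLF
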